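/- Let Ω ⊂ ℝ^r be compact. The Sliced 2-Wasserstein distance d_{SW_2} on probability measures on Ω is Hilbertian, with explicit feature map into F = L²((0,1) × S^{r−1}, λ¹ ⊗ σ) given by Φ(P)(t,θ) = F_{θ*_#P}^{[-1]}(t): for all probability measures P, Q on Ω, d_{SW_2}(P,Q)² = ∫_{S^{r−1}} ∫_0^1 (F_{θ*_#P}^{[-1]}(t) − F_{θ*_#Q}^{[-1]}(t))² dt dσ(θ) = ‖Φ(P) − Φ(Q)‖²_F. -/

import Mathlib

open MeasureTheory
open scoped RealInnerProductSpace

/-- The generalized inverse cumulative distribution function (quantile function) of a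
probability measure `μ` on `ℝ`: `F_μ^{[-1]}(t) = inf {x : F_μ(x) ≥ t}` where
`F_μ(x) = μ((−∞, x])`. -/
noncomputable def invCDF (μ : Measure ℝ) (t : ℝ) : ℝ :=
  sInf {x : ℝ | t ≤ (μ (Set.Iic x)).toReal}

/-- The uniform probability measure on the unit sphere `S^{r-1} ⊂ ℝ^r`
(the normalized surface measure). -/
noncomputable def uniformSphere (r : ℕ) :
    Measure (Metric.sphere (0 : EuclideanSpace ℝ (Fin r)) 1) :=
  ((volume : Measure (EuclideanSpace ℝ (Fin r))).toSphere Set.univ)⁻¹ •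
    (volume : Measure (EuclideanSpace ℝ (Fin r))).toSphere

/-- The squared Sliced 2-Wasserstein distance between probability measures on `ℝ^r`:
`d_{SW₂}(P,Q)² = ∫_{S^{r−1}} ∫_0^1 (F_{θ*_#P}^{[-1]}(t) − F_{θ*_#Q}^{[-1]}(t))² dt dσ(θ)`. -/
noncomputable def slicedW2Sq {r : ℕ} (P Q : Measure (EuclideanSpace ℝ (Fin r))) : ℝ :=
  ∫ θ : Metric.sphere (0 : EuclideanSpace ℝ (Fin r)) 1,
    (∫ t in Set.Ioc (0 : ℝ) 1,
      (invCDF (P.map fun x => ⟪x, (θ : EuclideanSpace ℝ (Fin r))⟫) t -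
        invCDF (Q.map fun x => ⟪x, (θ : EuclideanSpace ℝ (Fin r))⟫) t) ^ 2) ∂(uniformSphere r)

/-- The Sliced Wasserstein feature map sending a probability measure `P` on `ℝ^r` to the
function `(t, θ) ↦ F_{θ*_#P}^{[-1]}(t)` on `(0,1) × S^{r−1}`. -/
noncomputable def swFeature {r : ℕ} (P : Measure (EuclideanSpace ℝ (Fin r))) :
    ℝ × Metric.sphere (0 : EuclideanSpace ℝ (Fin r)) 1 → ℝ :=
  fun p => invCDF (P.map fun x => ⟪x, (p.2 : EuclideanSpace ℝ (Fin r))⟫) p.1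

/-- The measure `λ¹ ⊗ σ` on `(0,1) × S^{r−1}`, where `λ¹` is Lebesgue measure restricted to
`(0,1)` and `σ` is the uniform probability measure on the sphere. -/
noncomputable def swBaseMeasure (r : ℕ) :
    Measure (ℝ × Metric.sphere (0 : EuclideanSpace ℝ (Fin r)) 1) :=
  (volume.restrict (Set.Ioc (0 : ℝ) 1)).prod (uniformSphere r)

/-! ### Auxiliary lemmas -/

open Set Filter Topology

section cdf
variable (μ : Measure ℝ) [IsFiniteMeasure μ]

lemma SW.cdf_mono {x y : ℝ} (h : x ≤ y) : (μ (Iic x)).toReal ≤ (μ (Iic y)).toReal :=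
  ENNReal.toReal_mono (measure_ne_top μ _) (measure_mono (Iic_subset_Iic.2 h))

lemma SW.cdf_tendsto (x : ℝ) :
    Tendsto (fun n : ℕ => (μ (Iic (x + 1 / (n + 1)))).toReal) atTop (𝓝 ((μ (Iic x)).toReal)) := by
  have hiInter : ⋂ n : ℕ, Iic (x + 1 / (n + 1)) = Iic x := by
    ext y
    simp only [mem_iInter, mem_Iic]
    constructor
    · intro h
      refine le_of_forall_pos_le_add fun ε hε => ?_
      obtain ⟨n, hn⟩ := exists_nat_one_div_lt hε
      exact (h n).trans (by linarith)
    · intro h n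
      have : (0:ℝ) < 1 / (n + 1) := by positivity
      linarith
  have := tendsto_measure_iInter_atTop (μ := μ)
    (s := fun n : ℕ => Iic (x + 1 / (n + 1)))
    (fun n => measurableSet_Iic.nullMeasurableSet)
    (fun m n hmn => Iic_subset_Iic.2 (by
      have hc : (m:ℝ) + 1 ≤ (n:ℝ) + 1 := by exact_mod_cast Nat.succ_le_succ hmn
      have : (1:ℝ) / (n + 1) ≤ 1 / (m + 1) := by
        apply one_div_le_one_div_of_le
        · positivity
        · exact hc
      linarith))
    ⟨0, measure_ne_top μ _⟩
  rw [hiInter] at this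
  exact (ENNReal.tendsto_toReal (measure_ne_top μ _)).comp this

lemma SW.invCDF_le_iff {t : ℝ} (h_lo : ∃ z, (μ (Iic z)).toReal < t)
    (h_hi : ∃ y, t ≤ (μ (Iic y)).toReal) (x : ℝ) :
    invCDF μ t ≤ x ↔ t ≤ (μ (Iic x)).toReal := by
  obtain ⟨z, hz⟩ := h_lo
  obtain ⟨y, hy⟩ := h_hi
  have hbdd : BddBelow {x' : ℝ | t ≤ (μ (Iic x')).toReal} := by
    refine ⟨z, fun w hw => ?_⟩
    by_contra hwz
    push_neg at hwz
    exact absurd (hw.trans (SW.cdf_mono μ hwz.le)) (not_le.2 hz)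
  have hne : {x' : ℝ | t ≤ (μ (Iic x')).toReal}.Nonempty := ⟨y, hy⟩
  constructor
  · intro hle
    have key : ∀ n : ℕ, t ≤ (μ (Iic (x + 1 / (n + 1)))).toReal := by
      intro n
      have hlt : invCDF μ t < x + 1 / (n + 1) := by
        have : (0:ℝ) < 1 / (n + 1) := by positivity
        calc invCDF μ t ≤ x := hle
        _ < x + 1 / (n + 1) := by linarith
      obtain ⟨s, hs, hsx⟩ := (csInf_lt_iff hbdd hne).1 hlt
      exact hs.trans (SW.cdf_mono μ hsx.le)
    exact ge_of_tendsto' (SW.cdf_tendsto μ x) key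
  · intro ht
    exact csInf_le hbdd ht

omit [IsFiniteMeasure μ] in
lemma SW.invCDF_mem_Icc {t R : ℝ} (hR : t ≤ (μ (Iic R)).toReal)
    (hlo : ∀ w, w < -R → (μ (Iic w)).toReal < t) :
    invCDF μ t ∈ Icc (-R) R := by
  have hbdd : BddBelow {x' : ℝ | t ≤ (μ (Iic x')).toReal} := by
    refine ⟨-R, fun w hw => ?_⟩
    by_contra hwz
    push_neg at hwz
    exact absurd hw (not_le.2 (hlo w hwz))
  constructor
  · exact le_csInf ⟨R, hR⟩ fun w hw => by
      by_contra hc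
      push_neg at hc
      exact absurd hw (not_le.2 (hlo w hc))
  · exact csInf_le hbdd hR

end cdf

section sphere
variable {r : ℕ}

local notation "E" => EuclideanSpace ℝ (Fin r)
local notation "S" => Metric.sphere (0 : EuclideanSpace ℝ (Fin r)) 1

instance : IsFiniteMeasure (uniformSphere r) := by
  constructor
  rw [uniformSphere, Measure.smul_apply, smul_eq_mul]
  exact lt_of_le_of_lt (ENNReal.inv_mul_le_one _) ENNReal.one_lt_top

instance : IsFiniteMeasure (volume.restrict (Set.Ioc (0:ℝ) 1)) := by
  constructor
  rw [Measure.restrict_apply_univ, Real.volume_Ioc]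
  simp

instance : IsFiniteMeasure (swBaseMeasure r) := by
  rw [swBaseMeasure]; infer_instance

variable (P : Measure (EuclideanSpace ℝ (Fin r))) [IsProbabilityMeasure P]

lemma SW.inner_meas (θ : S) : Measurable (fun y : E => ⟪y, (θ : E)⟫) :=
  (continuous_id.inner continuous_const).measurable

instance (θ : S) : IsProbabilityMeasure (P.map (fun y : E => ⟪y, (θ : E)⟫)) :=
  Measure.isProbabilityMeasure_map (SW.inner_meas θ).aemeasurable

lemma SW.map_Iic (θ : S) (x : ℝ) :
    (P.map (fun y : E => ⟪y, (θ : E)⟫)) (Set.Iic x) = P {y : E | ⟪y, (θ : E)⟫ ≤ x} := by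
  rw [Measure.map_apply (SW.inner_meas θ) measurableSet_Iic]
  rfl

variable {R : ℝ}

lemma SW.cdf_hi (hball : P (Metric.closedBall 0 R) = 1) (θ : S) :
    P {y : E | ⟪y, (θ : E)⟫ ≤ R} = 1 := by
  refine le_antisymm prob_le_one ?_
  rw [← hball]
  refine measure_mono fun y hy => ?_
  have hy' : ‖y‖ ≤ R := by simpa [Metric.mem_closedBall, dist_zero_right] using hy
  have hθ : ‖(θ : E)‖ = 1 := by
    have := θ.2
    simpa [Metric.mem_sphere, dist_zero_right] using this
  calc ⟪y, (θ : E)⟫ ≤ ‖y‖ * ‖(θ : E)‖ := real_inner_le_norm y θ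
    _ = ‖y‖ := by rw [hθ, mul_one]
    _ ≤ R := hy'

lemma SW.cdf_lo (hball : P (Metric.closedBall 0 R) = 1) (θ : S) {w : ℝ} (hw : w < -R) :
    P {y : E | ⟪y, (θ : E)⟫ ≤ w} = 0 := by
  have hcompl : P (Metric.closedBall (0:E) R)ᶜ = 0 := by
    rw [measure_compl Metric.isClosed_closedBall.measurableSet (measure_ne_top P _), hball,
      measure_univ, tsub_self]
  refine measure_mono_null (fun y hy => ?_) hcompl
  simp only [Set.mem_setOf_eq] at hy
  intro hmem
  have hy' : ‖y‖ ≤ R := by simpa [Metric.mem_closedBall, dist_zero_right] using hmem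
  have hθ : ‖(θ : E)‖ = 1 := by
    have := θ.2
    simpa [Metric.mem_sphere, dist_zero_right] using this
  have habs : |⟪y, (θ : E)⟫| ≤ R := by
    calc |⟪y, (θ : E)⟫| ≤ ‖y‖ * ‖(θ : E)‖ := abs_real_inner_le_norm y θ
      _ ≤ R := by rw [hθ, mul_one]; exact hy'
  have := neg_le_of_abs_le habs
  linarith

/-- Truncation of `t` into `(0,1]`. -/
noncomputable def SW.projT (t : ℝ) : ℝ := if t ∈ Set.Ioc (0:ℝ) 1 then t else 1

lemma SW.projT_mem (t : ℝ) : SW.projT t ∈ Set.Ioc (0:ℝ) 1 := by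
  unfold SW.projT
  split
  · assumption
  · exact ⟨one_pos, le_refl 1⟩

lemma SW.projT_meas : Measurable SW.projT :=
  Measurable.ite measurableSet_Ioc measurable_id measurable_const

/-- The everywhere-defined truncated feature map. -/
noncomputable def SW.g (P : Measure (EuclideanSpace ℝ (Fin r))) :
    ℝ × Metric.sphere (0 : EuclideanSpace ℝ (Fin r)) 1 → ℝ :=
  fun p => invCDF (P.map fun y : E => ⟪y, (p.2 : E)⟫) (SW.projT p.1)

lemma SW.g_bound (hR : 0 ≤ R) (hball : P (Metric.closedBall 0 R) = 1) (p : ℝ × S) :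
    |SW.g P p| ≤ R := by
  have h1 : SW.projT p.1 ≤ ((P.map fun y : E => ⟪y, (p.2 : E)⟫) (Iic R)).toReal := by
    rw [SW.map_Iic, SW.cdf_hi P hball]
    simpa using (SW.projT_mem p.1).2
  have h2 : ∀ w, w < -R →
      (((P.map fun y : E => ⟪y, (p.2 : E)⟫)) (Iic w)).toReal < SW.projT p.1 := by
    intro w hw
    rw [SW.map_Iic, SW.cdf_lo P hball _ hw]
    simpa using (SW.projT_mem p.1).1
  have := SW.invCDF_mem_Icc (P.map fun y : E => ⟪y, (p.2 : E)⟫) h1 h2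
  exact abs_le.2 this

lemma SW.G_meas (x : ℝ) :
    Measurable (fun θ : S => (P {y : E | ⟪y, (θ : E)⟫ ≤ x}).toReal) := by
  have hs : MeasurableSet {q : S × E | ⟪q.2, (q.1 : E)⟫ ≤ x} := by
    have hc : Continuous fun q : S × E => ⟪q.2, (q.1 : E)⟫ :=
      continuous_snd.inner (continuous_subtype_val.comp continuous_fst)
    exact measurableSet_le hc.measurable measurable_const
  exact (measurable_measure_prodMk_left (ν := P) hs).ennreal_toReal

lemma SW.g_meas (hR : 0 ≤ R) (hball : P (Metric.closedBall 0 R) = 1) :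
    Measurable (SW.g P) := by
  apply measurable_of_Iic
  intro x
  have hiff : ∀ p : ℝ × S,
      SW.g P p ≤ x ↔ SW.projT p.1 ≤ (P {y : E | ⟪y, (p.2 : E)⟫ ≤ x}).toReal := by
    intro p
    rw [SW.g, ← SW.map_Iic P p.2 x]
    refine SW.invCDF_le_iff _ ⟨-R - 1, ?_⟩ ⟨R, ?_⟩ x
    · rw [SW.map_Iic, SW.cdf_lo P hball _ (by linarith)]
      simpa using (SW.projT_mem p.1).1
    · rw [SW.map_Iic, SW.cdf_hi P hball]
      simpa using (SW.projT_mem p.1).2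
  have : SW.g P ⁻¹' Iic x =
      {p : ℝ × S | SW.projT p.1 ≤ (P {y : E | ⟪y, (p.2 : E)⟫ ≤ x}).toReal} :=
    Set.ext fun p => hiff p
  rw [this]
  exact measurableSet_le (SW.projT_meas.comp measurable_fst)
    ((SW.G_meas P x).comp measurable_snd)

lemma SW.null_t : swBaseMeasure r {p : ℝ × S | p.1 ∉ Set.Ioc (0:ℝ) 1} = 0 := by
  have : {p : ℝ × S | p.1 ∉ Set.Ioc (0:ℝ) 1} = (Set.Ioc (0:ℝ) 1)ᶜ ×ˢ Set.univ := by
    ext p; simp [Set.mem_prod]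
  rw [swBaseMeasure, this, Measure.prod_prod, Measure.restrict_apply measurableSet_Ioc.compl]
  simp

lemma SW.g_ae_eq : SW.g P =ᵐ[swBaseMeasure r] swFeature P := by
  have hmem : {p : ℝ × S | p.1 ∈ Set.Ioc (0:ℝ) 1} ∈ ae (swBaseMeasure r) := by
    rw [mem_ae_iff]
    exact SW.null_t
  refine Filter.eventuallyEq_of_mem hmem fun p hp => ?_
  simp only [Set.mem_setOf_eq] at hp
  simp only [SW.g, swFeature, SW.projT, if_pos hp]

lemma SW.memLp (hR : 0 ≤ R) (hball : P (Metric.closedBall 0 R) = 1) :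
    MemLp (swFeature P) 2 (swBaseMeasure r) := by
  have hg : MemLp (SW.g P) 2 (swBaseMeasure r) := by
    refine MemLp.of_bound ((SW.g_meas P hR hball).aestronglyMeasurable) R
      (Filter.Eventually.of_forall fun p => ?_)
    simpa [Real.norm_eq_abs] using SW.g_bound P hR hball p
  exact hg.ae_eq (SW.g_ae_eq P)

end sphere

/-- **The Sliced 2-Wasserstein distance is Hilbertian**, with explicit feature map
`Φ(P)(t,θ) = F_{θ*_#P}^{[-1]}(t)` into the Hilbert space `F = L²((0,1) × S^{r−1}, λ¹ ⊗ σ)`: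
for all probability measures `P, Q` on a compact set `Ω ⊂ ℝ^r`, the feature functions are
square-integrable and
`d_{SW₂}(P,Q)² = ∫_{S^{r−1}} ∫_0^1 (F_{θ*_#P}^{[-1]}(t) − F_{θ*_#Q}^{[-1]}(t))² dt dσ(θ)
  = ‖Φ(P) − Φ(Q)‖²_F`. -/
theorem slicedW2_hilbertian {r : ℕ} (Ω : Set (EuclideanSpace ℝ (Fin r))) (hΩ : IsCompact Ω) :
    ∀ P Q : Measure (EuclideanSpace ℝ (Fin r)),
      IsProbabilityMeasure P → IsProbabilityMeasure Q → P Ω = 1 → Q Ω = 1 →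
      ∃ (hP : MemLp (swFeature P) 2 (swBaseMeasure r))
        (hQ : MemLp (swFeature Q) 2 (swBaseMeasure r)),
        slicedW2Sq P Q = ‖hP.toLp (swFeature P) - hQ.toLp (swFeature Q)‖ ^ 2 := by
  intro P Q hPp hQp hPΩ hQΩ
  haveI := hPp
  haveI := hQp
  obtain ⟨R, hR0, hΩR⟩ := hΩ.isBounded.subset_closedBall_lt 0 0
  have hballP : P (Metric.closedBall 0 R) = 1 :=
    le_antisymm prob_le_one (hPΩ ▸ measure_mono hΩR)
  have hballQ : Q (Metric.closedBall 0 R) = 1 :=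
    le_antisymm prob_le_one (hQΩ ▸ measure_mono hΩR)
  have memP : MemLp (swFeature P) 2 (swBaseMeasure r) := SW.memLp P hR0.le hballP
  have memQ : MemLp (swFeature Q) 2 (swBaseMeasure r) := SW.memLp Q hR0.le hballQ
  refine ⟨memP, memQ, ?_⟩
  set X := memP.toLp (swFeature P) - memQ.toLp (swFeature Q) with hX
  have hco : (X : ℝ × Metric.sphere (0 : EuclideanSpace ℝ (Fin r)) 1 → ℝ)
      =ᵐ[swBaseMeasure r] fun p => swFeature P p - swFeature Q p :=
    (Lp.coeFn_sub _ _).trans (memP.coeFn_toLp.sub memQ.coeFn_toLp)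
  have hsub : MemLp (fun p => swFeature P p - swFeature Q p) 2 (swBaseMeasure r) :=
    memP.sub memQ
  have hInt : Integrable (fun p => (swFeature P p - swFeature Q p) ^ 2) (swBaseMeasure r) :=
    hsub.integrable_sq
  have hnorm : ‖X‖ ^ 2 = ∫ p, (swFeature P p - swFeature Q p) ^ 2 ∂(swBaseMeasure r) := by
    rw [← real_inner_self_eq_norm_sq, L2.inner_def]
    refine integral_congr_ae (hco.mono fun p hp => ?_)
    simp only [hp, real_inner_self_eq_norm_sq, Real.norm_eq_abs, sq_abs]
  have hprod : ∫ p, (swFeature P p - swFeature Q p) ^ 2 ∂(swBaseMeasure r) =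
      ∫ θ : Metric.sphere (0 : EuclideanSpace ℝ (Fin r)) 1,
        (∫ t in Set.Ioc (0:ℝ) 1, (swFeature P (t, θ) - swFeature Q (t, θ)) ^ 2)
        ∂(uniformSphere r) :=
    integral_prod_symm _ hInt
  calc slicedW2Sq P Q
      = ∫ θ : Metric.sphere (0 : EuclideanSpace ℝ (Fin r)) 1,
        (∫ t in Set.Ioc (0:ℝ) 1, (swFeature P (t, θ) - swFeature Q (t, θ)) ^ 2)
        ∂(uniformSphere r) := rfl
    _ = ∫ p, (swFeature P p - swFeature Q p) ^ 2 ∂(swBaseMeasure r) := hprod.symm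
    _ = ‖X‖ ^ 2 := hnorm.symm
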